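/- Let X be a real Banach space, let φ : X → ℝ be Lipschitz, let x ∈ X, and let y₀ ∈ X with ‖y₀‖ = 1 be such that the directional derivative lim_{t→0} (φ(x + t y₀) − φ(x))/t exists and equals F_φ(x). Suppose the norm of X is Gateaux differentiable at y₀ with Gateaux derivative f_{y₀} ∈ X*. Then φ is Gateaux differentiable at x and for every y ∈ X, ⟨φ'(x), y⟩ = F_φ(x) · f_{y₀}(y). -/

import Mathlib

open Filter Topology

/-- A function `f : X → ℝ` is Gateaux differentiable at `x` with Gateaux derivative the
continuous linear functional `A` if for every `y`, `(f (x + t y) - f x)/t → A y` as `t → 0`. -/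
def GateauxDiffAt {X : Type*} [NormedAddCommGroup X] [NormedSpace ℝ X]
    (f : X → ℝ) (x : X) (A : X →L[ℝ] ℝ) : Prop :=
  ∀ y : X, Tendsto (fun t : ℝ => (f (x + t • y) - f x) / t) (𝓝[≠] 0) (𝓝 (A y))

/-- `F_φ(x) = sup_{‖y‖=1} sup_{z ∈ X} limsup_{t→0⁺} (φ(x+tz+ty) - φ(x+tz))/t`. -/
noncomputable def Fsup {X : Type*} [NormedAddCommGroup X] [NormedSpace ℝ X]
    (φ : X → ℝ) (x : X) : ℝ :=
  ⨆ y : {y : X // ‖y‖ = 1}, ⨆ z : X,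
    limsup (fun t : ℝ => (φ (x + t • z + t • (y : X)) - φ (x + t • z)) / t) (𝓝[>] 0)



section AuxTendsto

private lemma tendsto_mul_left_Ioi {c : ℝ} (hc : 0 < c) :
    Tendsto (fun t : ℝ => c * t) (𝓝[>] 0) (𝓝[>] 0) := by
  apply tendsto_nhdsWithin_of_tendsto_nhds_of_eventually_within
  · have h : Tendsto (fun t : ℝ => c * t) (𝓝 0) (𝓝 (c * 0)) :=
      (continuous_const.mul continuous_id).tendsto 0
    simpa using h.mono_left nhdsWithin_le_nhds
  · filter_upwards [self_mem_nhdsWithin] with t ht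
    exact Set.mem_Ioi.2 (mul_pos hc (Set.mem_Ioi.1 ht))

private lemma tendsto_mul_left_ne {c : ℝ} (hc : c ≠ 0) :
    Tendsto (fun t : ℝ => c * t) (𝓝[≠] 0) (𝓝[≠] 0) := by
  apply tendsto_nhdsWithin_of_tendsto_nhds_of_eventually_within
  · have h : Tendsto (fun t : ℝ => c * t) (𝓝 0) (𝓝 (c * 0)) :=
      (continuous_const.mul continuous_id).tendsto 0
    simpa using h.mono_left nhdsWithin_le_nhds
  · filter_upwards [self_mem_nhdsWithin] with t ht
    exact Set.mem_compl_singleton_iff.2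
      (mul_ne_zero hc (Set.mem_compl_singleton_iff.1 ht))

private lemma tendsto_neg_Iio_Ioi :
    Tendsto (fun t : ℝ => -t) (𝓝[<] 0) (𝓝[>] 0) := by
  apply tendsto_nhdsWithin_of_tendsto_nhds_of_eventually_within
  · have h : Tendsto (fun t : ℝ => -t) (𝓝 (0:ℝ)) (𝓝 (-0)) := continuous_neg.tendsto 0
    simpa using h.mono_left nhdsWithin_le_nhds
  · filter_upwards [self_mem_nhdsWithin] with t ht
    exact Set.mem_Ioi.2 (by simpa using (Set.mem_Iio.1 ht))

end AuxTendsto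

section Main

variable {X : Type*} [NormedAddCommGroup X] [NormedSpace ℝ X]

private lemma abs_slope_le {L : NNReal} {φ : X → ℝ} (hL : LipschitzWith L φ)
    (a v : X) {t : ℝ} (ht : t ≠ 0) :
    |(φ (a + t • v) - φ a) / t| ≤ (L : ℝ) * ‖v‖ := by
  have h := hL.dist_le_mul (a + t • v) a
  rw [Real.dist_eq, dist_eq_norm] at h
  have h2 : ‖a + t • v - a‖ = |t| * ‖v‖ := by
    simp [norm_smul, Real.norm_eq_abs]
  rw [h2] at h
  rw [abs_div, div_le_iff₀ (abs_pos.2 ht)]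
  calc |φ (a + t • v) - φ a| ≤ (L : ℝ) * (|t| * ‖v‖) := h
    _ = (L : ℝ) * ‖v‖ * |t| := by ring

private noncomputable def Tslope (φ : X → ℝ) (x u z : X) : ℝ :=
  limsup (fun t : ℝ => (φ (x + t • z + t • u) - φ (x + t • z)) / t) (𝓝[>] 0)

private lemma limsup_unit_le {L : NNReal} {φ : X → ℝ} (hL : LipschitzWith L φ)
    (x z y : X) (hy : ‖y‖ = 1) : Tslope φ x y z ≤ Fsup φ x := by
  have hev : ∀ (u : {y : X // ‖y‖ = 1}) (z' : X),
      ∀ᶠ t in 𝓝[>] (0:ℝ),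
        |(φ (x + t • z' + t • (u : X)) - φ (x + t • z')) / t| ≤ (L : ℝ) := by
    intro u z'
    filter_upwards [self_mem_nhdsWithin] with t ht
    have h := abs_slope_le hL (x + t • z') (u : X) (ne_of_gt (Set.mem_Ioi.1 ht))
    simpa [u.2] using h
  have hTle : ∀ (u : {y : X // ‖y‖ = 1}) (z' : X), Tslope φ x (u : X) z' ≤ (L : ℝ) := by
    intro u z'
    refine limsup_le_of_le ?_ ?_
    · exact isCoboundedUnder_le_of_eventually_le _
        ((hev u z').mono fun t ht => neg_le_of_abs_le ht)
    · exact (hev u z').mono fun t ht => le_of_abs_le ht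
  have h1 : Tslope φ x y z ≤ ⨆ z' : X, Tslope φ x y z' := by
    have hb : BddAbove (Set.range fun z' : X => Tslope φ x y z') :=
      ⟨(L : ℝ), by rintro _ ⟨z', rfl⟩; exact hTle ⟨y, hy⟩ z'⟩
    exact le_ciSup hb z
  have h2 : (⨆ z' : X, Tslope φ x y z')
      ≤ ⨆ u : {y : X // ‖y‖ = 1}, ⨆ z' : X, Tslope φ x (u : X) z' := by
    have hb : BddAbove (Set.range fun u : {y : X // ‖y‖ = 1} =>
        ⨆ z' : X, Tslope φ x (u : X) z') :=
      ⟨(L : ℝ), by rintro _ ⟨u, rfl⟩; exact ciSup_le (hTle u)⟩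
    exact le_ciSup hb ⟨y, hy⟩
  exact (h1.trans h2).trans_eq rfl

private lemma cross_lt_Ioi {L : NNReal} {φ : X → ℝ} (hL : LipschitzWith L φ) (x : X)
    (z v : X) {ε : ℝ} (hε : 0 < ε) :
    ∀ᶠ t in 𝓝[>] (0:ℝ),
      (φ (x + t • z + t • v) - φ (x + t • z)) / t < Fsup φ x * ‖v‖ + ε := by
  rcases eq_or_ne v 0 with rfl | hv
  · filter_upwards with t
    simpa using hε
  · have hc0 : 0 < ‖v‖ := norm_pos_iff.2 hv
    set y : X := ‖v‖⁻¹ • v with hydef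
    have hy : ‖y‖ = 1 := norm_smul_inv_norm (𝕜 := ℝ) hv
    have hls : Tslope φ x y (‖v‖⁻¹ • z) ≤ Fsup φ x := limsup_unit_le hL x (‖v‖⁻¹ • z) y hy
    have hbdd : IsBoundedUnder (· ≤ ·) (𝓝[>] (0:ℝ))
        (fun t => (φ (x + t • (‖v‖⁻¹ • z) + t • y) - φ (x + t • (‖v‖⁻¹ • z))) / t) := by
      refine isBoundedUnder_of_eventually_le (a := (L : ℝ)) ?_
      filter_upwards [self_mem_nhdsWithin] with t ht
      have h := abs_slope_le hL (x + t • (‖v‖⁻¹ • z)) y (ne_of_gt (Set.mem_Ioi.1 ht))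
      rw [hy, mul_one] at h
      exact le_of_abs_le h
    have hev : ∀ᶠ τ in 𝓝[>] (0:ℝ),
        (φ (x + τ • (‖v‖⁻¹ • z) + τ • y) - φ (x + τ • (‖v‖⁻¹ • z))) / τ
          < Fsup φ x + ε / ‖v‖ := by
      refine eventually_lt_of_limsup_lt ?_ hbdd
      exact lt_of_le_of_lt hls (by linarith [div_pos hε hc0])
    have hmap := (tendsto_mul_left_Ioi hc0).eventually hev
    filter_upwards [hmap, self_mem_nhdsWithin] with t hlt ht
    have ht0 : (0:ℝ) < t := Set.mem_Ioi.1 ht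
    have e1 : (‖v‖ * t) • (‖v‖⁻¹ • z) = t • z := by
      rw [smul_smul]
      congr 1
      field_simp
    have e2 : (‖v‖ * t) • y = t • v := by
      rw [hydef, smul_smul]
      congr 1
      field_simp
    simp only [e1, e2] at hlt
    have h3 := mul_lt_mul_of_pos_left hlt hc0
    have e3 : ‖v‖ * ((φ (x + t • z + t • v) - φ (x + t • z)) / (‖v‖ * t))
        = (φ (x + t • z + t • v) - φ (x + t • z)) / t := by
      field_simp
    have e4 : ‖v‖ * (Fsup φ x + ε / ‖v‖) = Fsup φ x * ‖v‖ + ε := by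
      field_simp
    rw [e3, e4] at h3
    exact h3

private lemma cross_lt_ne {L : NNReal} {φ : X → ℝ} (hL : LipschitzWith L φ) (x : X)
    (z v : X) {ε : ℝ} (hε : 0 < ε) :
    ∀ᶠ t in 𝓝[≠] (0:ℝ),
      (φ (x + t • z + t • v) - φ (x + t • z)) / t < Fsup φ x * ‖v‖ + ε := by
  rw [← nhdsLT_sup_nhdsGT (0:ℝ), eventually_sup]
  constructor
  · have h := tendsto_neg_Iio_Ioi.eventually (cross_lt_Ioi hL x (-z - v) v hε)
    filter_upwards [h] with t ht
    have e1 : x + (-t) • (-z - v) + (-t) • v = x + t • z := by module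
    have e2 : x + (-t) • (-z - v) = x + t • z + t • v := by module
    rw [e1] at ht
    rw [e2] at ht
    have e3 : (φ (x + t • z + t • v) - φ (x + t • z)) / t
        = (φ (x + t • z) - φ (x + t • z + t • v)) / (-t) := by
      rw [div_neg, ← neg_div, neg_sub]
    rw [e3]
    exact ht
  · exact cross_lt_Ioi hL x z v hε

private lemma Fsup_nonneg {L : NNReal} {φ : X → ℝ} (hL : LipschitzWith L φ)
    {x y₀ : X} (hy₀ : ‖y₀‖ = 1)
    (hdir : Tendsto (fun t : ℝ => (φ (x + t • y₀) - φ x) / t) (𝓝[≠] 0) (𝓝 (Fsup φ x))) :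
    0 ≤ Fsup φ x := by
  by_contra hM
  push_neg at hM
  have hε : 0 < -Fsup φ x / 2 := by linarith
  have h1 := cross_lt_ne hL x y₀ (-y₀) hε
  have h2 : ∀ᶠ t in 𝓝[≠] (0:ℝ),
      (φ (x + t • y₀) - φ x) / t < Fsup φ x + -Fsup φ x / 2 :=
    hdir.eventually_lt_const (by linarith)
  obtain ⟨t, ht1, ht2⟩ := (h1.and h2).exists
  have e1 : x + t • y₀ + t • (-y₀) = x := by module
  rw [e1, norm_neg, hy₀, mul_one] at ht1
  have e2 : (φ x - φ (x + t • y₀)) / t = -((φ (x + t • y₀) - φ x) / t) := by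
    rw [← neg_div, neg_sub]
  rw [e2] at ht1
  linarith

private lemma exists_good_s {y₀ : X} (hy₀ : ‖y₀‖ = 1) {fy₀ : X →L[ℝ] ℝ}
    (hnorm : GateauxDiffAt (fun y : X => ‖y‖) y₀ fy₀) (y : X) {ε : ℝ} (hε : 0 < ε) :
    ∃ s : ℝ, 0 < s ∧ ‖y₀ - s • y‖ ≤ 1 - s * fy₀ y + s * ε := by
  have h := hnorm (-y)
  have h' : Tendsto (fun t : ℝ => (‖y₀ + t • (-y)‖ - ‖y₀‖) / t) (𝓝[>] 0)
      (𝓝 (fy₀ (-y))) :=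
    h.mono_left (nhdsWithin_mono 0 fun t ht =>
      Set.mem_compl_singleton_iff.2 (ne_of_gt (Set.mem_Ioi.1 ht)))
  have h2 : ∀ᶠ s in 𝓝[>] (0:ℝ), ‖y₀ - s • y‖ ≤ 1 - s * fy₀ y + s * ε := by
    filter_upwards [h'.eventually_lt_const (by linarith : fy₀ (-y) < fy₀ (-y) + ε),
      self_mem_nhdsWithin] with s hs hsmem
    have hs0 : 0 < s := Set.mem_Ioi.1 hsmem
    have e1 : y₀ + s • (-y) = y₀ - s • y := by module
    rw [e1, hy₀, map_neg] at hs
    have h3 := (div_lt_iff₀ hs0).1 hs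
    nlinarith [h3]
  obtain ⟨s, hs1, hs2⟩ := (eventually_mem_nhdsWithin.and h2).exists
  exact ⟨s, Set.mem_Ioi.1 hs1, hs2⟩

private lemma eventually_slope_gt {L : NNReal} {φ : X → ℝ} (hL : LipschitzWith L φ)
    {x y₀ : X} (hy₀ : ‖y₀‖ = 1) {fy₀ : X →L[ℝ] ℝ}
    (hnorm : GateauxDiffAt (fun y : X => ‖y‖) y₀ fy₀)
    (hdir : Tendsto (fun t : ℝ => (φ (x + t • y₀) - φ x) / t) (𝓝[≠] 0) (𝓝 (Fsup φ x)))
    (y : X) {ε : ℝ} (hε : 0 < ε) :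
    ∀ᶠ t in 𝓝[≠] (0:ℝ), Fsup φ x * fy₀ y - ε < (φ (x + t • y) - φ x) / t := by
  have hM0 : 0 ≤ Fsup φ x := Fsup_nonneg hL hy₀ hdir
  have hM1 : (0:ℝ) < Fsup φ x + 1 := by linarith
  have hε' : 0 < ε / (4 * (Fsup φ x + 1)) := by positivity
  obtain ⟨s, hs0, hsle⟩ := exists_good_s hy₀ hnorm y hε'
  have hcross := cross_lt_ne hL x (s • y) (y₀ - s • y)
    (ε := s * ε / 4) (by positivity)
  have hdir' : ∀ᶠ t in 𝓝[≠] (0:ℝ),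
      Fsup φ x - s * ε / 4 < (φ (x + t • y₀) - φ x) / t :=
    hdir.eventually_const_lt (by nlinarith)
  have key : ∀ᶠ t in 𝓝[≠] (0:ℝ),
      Fsup φ x * fy₀ y - ε < (φ (x + (s * t) • y) - φ x) / (s * t) := by
    filter_upwards [hcross, hdir', self_mem_nhdsWithin] with t hc hd ht
    have htne : t ≠ 0 := Set.mem_compl_singleton_iff.1 ht
    have e1 : x + t • (s • y) + t • (y₀ - s • y) = x + t • y₀ := by module
    rw [e1] at hc
    have hnorm_le : Fsup φ x * ‖y₀ - s • y‖
        ≤ Fsup φ x * (1 - s * fy₀ y + s * (ε / (4 * (Fsup φ x + 1)))) :=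
      mul_le_mul_of_nonneg_left hsle hM0
    have hMe : Fsup φ x * (s * (ε / (4 * (Fsup φ x + 1)))) ≤ s * (ε / 4) := by
      have hdd : ε / (4 * (Fsup φ x + 1)) = ε / 4 / (Fsup φ x + 1) := by
        rw [div_div]
      have k2 : (Fsup φ x + 1) * (ε / 4 / (Fsup φ x + 1)) = ε / 4 := by
        rw [mul_comm, div_mul_cancel₀ _ (ne_of_gt hM1)]
      have k3 : Fsup φ x * (ε / 4 / (Fsup φ x + 1))
          ≤ (Fsup φ x + 1) * (ε / 4 / (Fsup φ x + 1)) :=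
        mul_le_mul_of_nonneg_right (by linarith) (by positivity)
      rw [hdd]
      calc Fsup φ x * (s * (ε / 4 / (Fsup φ x + 1)))
          = s * (Fsup φ x * (ε / 4 / (Fsup φ x + 1))) := by ring
        _ ≤ s * ((Fsup φ x + 1) * (ε / 4 / (Fsup φ x + 1))) :=
            mul_le_mul_of_nonneg_left k3 hs0.le
        _ = s * (ε / 4) := by rw [k2]
    have e2 : (φ (x + t • (s • y)) - φ x) / t
        = (φ (x + t • y₀) - φ x) / t - (φ (x + t • y₀) - φ (x + t • (s • y))) / t := by
      ring
    have hslope : s * (Fsup φ x * fy₀ y - ε) < (φ (x + t • (s • y)) - φ x) / t := by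
      rw [e2]
      nlinarith [hd, hc, hnorm_le, hMe, hs0, hε]
    have e3 : (φ (x + t • (s • y)) - φ x) / t
        = s * ((φ (x + (s * t) • y) - φ x) / (s * t)) := by
      rw [show t • (s • y) = (s * t) • y by rw [smul_smul, mul_comm]]
      field_simp
    rw [e3] at hslope
    exact lt_of_mul_lt_mul_left hslope hs0.le
  have hmap := (tendsto_mul_left_ne (c := s⁻¹) (inv_ne_zero hs0.ne')).eventually key
  filter_upwards [hmap] with τ hτ
  have e : s * (s⁻¹ * τ) = τ := by
    field_simp
  simpa only [e] using hτ

end Main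

theorem gateauxDiffAt_of_directional_max {X : Type*} [NormedAddCommGroup X]
    [NormedSpace ℝ X] [CompleteSpace X] (φ : X → ℝ) (hφ : ∃ L : NNReal, LipschitzWith L φ)
    (x y₀ : X) (hy₀ : ‖y₀‖ = 1) (fy₀ : X →L[ℝ] ℝ)
    (hnorm : GateauxDiffAt (fun y : X => ‖y‖) y₀ fy₀)
    (hdir : Tendsto (fun t : ℝ => (φ (x + t • y₀) - φ x) / t) (𝓝[≠] 0) (𝓝 (Fsup φ x))) :
    ∃ A : X →L[ℝ] ℝ, GateauxDiffAt φ x A ∧ ∀ y : X, A y = Fsup φ x * fy₀ y := by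
  obtain ⟨L, hL⟩ := hφ
  refine ⟨Fsup φ x • fy₀, ?_, fun y => by simp⟩
  intro y
  have hval : (Fsup φ x • fy₀) y = Fsup φ x * fy₀ y := by simp
  rw [hval, tendsto_order]
  constructor
  · intro a ha
    have h := eventually_slope_gt hL hy₀ hnorm hdir y
      (ε := Fsup φ x * fy₀ y - a) (by linarith)
    exact h.mono fun t ht => by linarith
  · intro b hb
    have hlow := eventually_slope_gt hL hy₀ hnorm hdir (-y)
      (ε := b - Fsup φ x * fy₀ y) (by linarith)
    have hneg : Tendsto (fun t : ℝ => -t) (𝓝[≠] (0:ℝ)) (𝓝[≠] 0) := by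
      have h := tendsto_mul_left_ne (c := (-1:ℝ)) (by norm_num)
      simpa using h
    have h2 := hneg.eventually hlow
    filter_upwards [h2] with t ht
    have e : x + (-t) • (-y) = x + t • y := by module
    rw [e, map_neg, div_neg] at ht
    linarith
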